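/- Let C be a regular convex cone in ℝⁿ, A ⊆ C and B ⊆ C* compact sets with γ := sup_{a∈A,b∈B} ⟨a,b⟩ > 0, and M > 0 a bound with ‖a‖₂ ≤ M and ‖b‖₂ ≤ M for all a ∈ A, b ∈ B. Define A' := A ∪ {x ∈ C : ‖x‖₂ ≤ min(γ/M, √γ)} and B' := B ∪ {x ∈ C* : ‖x‖₂ ≤ min(γ/M, √γ)}. Then A' and B' are compact, cone(A') = C, cone(B') = C*, and sup_{a'∈A', b'∈B'} ⟨a',b'⟩ = γ. -/

import Mathlib

open scoped InnerProductSpace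

/-- The dual cone of a set in a real inner product space. -/
def dualCone {n : ℕ} (C : Set (EuclideanSpace ℝ (Fin n))) : Set (EuclideanSpace ℝ (Fin n)) :=
  {y | ∀ x ∈ C, 0 ≤ ⟪x, y⟫_ℝ}

/-- The closed conic hull of a set. -/
def coneHull {n : ℕ} (S : Set (EuclideanSpace ℝ (Fin n))) : Set (EuclideanSpace ℝ (Fin n)) :=
  closure {x | ∃ c : ℝ, 0 ≤ c ∧ ∃ y ∈ convexHull ℝ S, x = c • y}

lemma aux_coneHull_eq {n : ℕ} (D : Set (EuclideanSpace ℝ (Fin n)))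
    (hclosed : IsClosed D) (hconv : Convex ℝ D)
    (hcone : ∀ (c : ℝ), 0 < c → ∀ x ∈ D, c • x ∈ D)
    (h0 : (0 : EuclideanSpace ℝ (Fin n)) ∈ D)
    (T : Set (EuclideanSpace ℝ (Fin n))) (hT : T ⊆ D) (r : ℝ) (hr : 0 < r) :
    coneHull (T ∪ {x ∈ D | ‖x‖ ≤ r}) = D := by
  have hsub : T ∪ {x ∈ D | ‖x‖ ≤ r} ⊆ D := by
    rintro x (hx | ⟨hx, -⟩)
    exacts [hT hx, hx]
  have hch : convexHull ℝ (T ∪ {x ∈ D | ‖x‖ ≤ r}) ⊆ D := convexHull_min hsub hconv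
  have hE : {x | ∃ c : ℝ, 0 ≤ c ∧ ∃ y ∈ convexHull ℝ (T ∪ {x ∈ D | ‖x‖ ≤ r}), x = c • y} = D := by
    apply Set.Subset.antisymm
    · rintro x ⟨c, hc, y, hy, rfl⟩
      rcases eq_or_lt_of_le hc with h | h
      · simpa [← h] using h0
      · exact hcone c h y (hch hy)
    · intro x hx
      by_cases hx0 : x = 0
      · exact ⟨0, le_refl 0, 0, subset_convexHull ℝ _ (Or.inr ⟨h0, by simp [hr.le]⟩),
          by simp [hx0]⟩
      · have hnx : 0 < ‖x‖ := norm_pos_iff.mpr hx0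
        refine ⟨‖x‖ / r, by positivity, (r / ‖x‖) • x,
          subset_convexHull ℝ _ (Or.inr ⟨hcone _ (by positivity) x hx, ?_⟩), ?_⟩
        · rw [norm_smul, Real.norm_eq_abs, abs_of_pos (div_pos hr hnx), div_mul_cancel₀ _ hnx.ne']
        · rw [smul_smul, div_mul_div_cancel₀', div_self hr.ne', one_smul]
          exact hnx.ne'
  rw [coneHull, hE, hclosed.closure_eq]

theorem stmt_3 {n : ℕ} (C : Set (EuclideanSpace ℝ (Fin n)))
    (hclosed : IsClosed C) (hconv : Convex ℝ C)
    (hcone : ∀ (c : ℝ), 0 < c → ∀ x ∈ C, c • x ∈ C)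
    (hpointed : ∀ x ∈ C, -x ∈ C → x = 0)
    (hfull : (interior C).Nonempty)
    (A B : Set (EuclideanSpace ℝ (Fin n)))
    (hA : A ⊆ C) (hB : B ⊆ dualCone C)
    (hAc : IsCompact A) (hBc : IsCompact B)
    (γ : ℝ) (hγ : γ = sSup {r : ℝ | ∃ a ∈ A, ∃ b ∈ B, r = ⟪a, b⟫_ℝ}) (hγpos : 0 < γ)
    (M : ℝ) (hM : 0 < M)
    (hMA : ∀ a ∈ A, ‖a‖ ≤ M) (hMB : ∀ b ∈ B, ‖b‖ ≤ M) :
    IsCompact (A ∪ {x ∈ C | ‖x‖ ≤ min (γ / M) (Real.sqrt γ)}) ∧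
    IsCompact (B ∪ {x ∈ dualCone C | ‖x‖ ≤ min (γ / M) (Real.sqrt γ)}) ∧
    coneHull (A ∪ {x ∈ C | ‖x‖ ≤ min (γ / M) (Real.sqrt γ)}) = C ∧
    coneHull (B ∪ {x ∈ dualCone C | ‖x‖ ≤ min (γ / M) (Real.sqrt γ)}) = dualCone C ∧
    sSup {r : ℝ | ∃ a ∈ A ∪ {x ∈ C | ‖x‖ ≤ min (γ / M) (Real.sqrt γ)},
      ∃ b ∈ B ∪ {x ∈ dualCone C | ‖x‖ ≤ min (γ / M) (Real.sqrt γ)}, r = ⟪a, b⟫_ℝ} = γ := by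
  set ρ : ℝ := min (γ / M) (Real.sqrt γ) with hρdef
  have hρpos : 0 < ρ := lt_min (div_pos hγpos hM) (Real.sqrt_pos.mpr hγpos)
  -- dual cone properties
  have hDclosed : IsClosed (dualCone C) := by
    have : dualCone C = ⋂ x ∈ C, {y : EuclideanSpace ℝ (Fin n) | 0 ≤ ⟪x, y⟫_ℝ} := by
      ext y; simp [dualCone]
    rw [this]
    exact isClosed_biInter fun x _ =>
      isClosed_le continuous_const (continuous_const.inner continuous_id)
  have hDconv : Convex ℝ (dualCone C) := by
    intro y1 hy1 y2 hy2 a b ha hb hab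
    intro x hx
    rw [inner_add_right, real_inner_smul_right, real_inner_smul_right]
    exact add_nonneg (mul_nonneg ha (hy1 x hx)) (mul_nonneg hb (hy2 x hx))
  have hDcone : ∀ (c : ℝ), 0 < c → ∀ y ∈ dualCone C, c • y ∈ dualCone C := by
    intro c hc y hy x hx
    rw [real_inner_smul_right]
    exact mul_nonneg hc.le (hy x hx)
  have hD0 : (0 : EuclideanSpace ℝ (Fin n)) ∈ dualCone C := by
    intro x _; simp
  -- 0 ∈ C
  have hC0 : (0 : EuclideanSpace ℝ (Fin n)) ∈ C := by
    obtain ⟨x, hx⟩ := hfull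
    have hxC : x ∈ C := interior_subset hx
    have htend : Filter.Tendsto (fun k : ℕ => (1 / (k + 1) : ℝ) • x) Filter.atTop
        (nhds (0 : EuclideanSpace ℝ (Fin n))) := by
      have : Filter.Tendsto (fun k : ℕ => 1 / ((k : ℝ) + 1)) Filter.atTop (nhds 0) :=
        tendsto_one_div_add_atTop_nhds_zero_nat
      simpa using this.smul_const x
    refine hclosed.mem_of_tendsto htend (Filter.Eventually.of_forall fun k => ?_)
    exact hcone _ (by positivity) x hxC
  -- compactness of the balls
  have hballC : IsCompact {x ∈ C | ‖x‖ ≤ ρ} := by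
    refine (isCompact_closedBall (0 : EuclideanSpace ℝ (Fin n)) ρ).of_isClosed_subset
      (hclosed.inter (isClosed_le continuous_norm continuous_const)) ?_
    intro x hx
    simpa [Metric.mem_closedBall, dist_eq_norm] using hx.2
  have hballD : IsCompact {x ∈ dualCone C | ‖x‖ ≤ ρ} := by
    refine (isCompact_closedBall (0 : EuclideanSpace ℝ (Fin n)) ρ).of_isClosed_subset
      (hDclosed.inter (isClosed_le continuous_norm continuous_const)) ?_
    intro x hx
    simpa [Metric.mem_closedBall, dist_eq_norm] using hx.2
  refine ⟨hAc.union hballC, hBc.union hballD,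
    aux_coneHull_eq C hclosed hconv hcone hC0 A hA ρ hρpos,
    aux_coneHull_eq (dualCone C) hDclosed hDconv hDcone hD0 B hB ρ hρpos, ?_⟩
  -- sSup part
  set S : Set ℝ := {r : ℝ | ∃ a ∈ A, ∃ b ∈ B, r = ⟪a, b⟫_ℝ} with hS
  have hSne : S.Nonempty := by
    by_contra h
    rw [Set.not_nonempty_iff_eq_empty] at h
    rw [h, Real.sSup_empty] at hγ
    exact absurd hγ hγpos.ne'
  have hSbdd : BddAbove S := by
    refine ⟨M * M, ?_⟩
    rintro r ⟨a, ha, b, hb, rfl⟩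
    calc ⟪a, b⟫_ℝ ≤ ‖a‖ * ‖b‖ := real_inner_le_norm a b
      _ ≤ M * M := mul_le_mul (hMA a ha) (hMB b hb) (norm_nonneg _) hM.le
  set S' : Set ℝ := {r : ℝ | ∃ a ∈ A ∪ {x ∈ C | ‖x‖ ≤ ρ},
      ∃ b ∈ B ∪ {x ∈ dualCone C | ‖x‖ ≤ ρ}, r = ⟪a, b⟫_ℝ} with hS'
  have hSS' : S ⊆ S' := by
    rintro r ⟨a, ha, b, hb, rfl⟩
    exact ⟨a, Or.inl ha, b, Or.inl hb, rfl⟩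
  have hS'le : ∀ r ∈ S', r ≤ γ := by
    rintro r ⟨a, ha, b, hb, rfl⟩
    have hia : ⟪a, b⟫_ℝ ≤ ‖a‖ * ‖b‖ := real_inner_le_norm a b
    rcases ha with ha | ⟨-, ha2⟩
    · rcases hb with hb | ⟨-, hb2⟩
      · rw [hγ]
        exact le_csSup hSbdd ⟨a, ha, b, hb, rfl⟩
      · calc ⟪a, b⟫_ℝ ≤ ‖a‖ * ‖b‖ := hia
          _ ≤ M * (γ / M) := mul_le_mul (hMA a ha)
              (le_trans hb2 (min_le_left _ _)) (norm_nonneg _) hM.le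
          _ = γ := by field_simp
    · rcases hb with hb | ⟨-, hb2⟩
      · calc ⟪a, b⟫_ℝ ≤ ‖a‖ * ‖b‖ := hia
          _ ≤ (γ / M) * M := mul_le_mul (le_trans ha2 (min_le_left _ _))
              (hMB b hb) (norm_nonneg _) (by positivity)
          _ = γ := by field_simp
      · calc ⟪a, b⟫_ℝ ≤ ‖a‖ * ‖b‖ := hia
          _ ≤ Real.sqrt γ * Real.sqrt γ := mul_le_mul (le_trans ha2 (min_le_right _ _))
              (le_trans hb2 (min_le_right _ _)) (norm_nonneg _) (Real.sqrt_nonneg _)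
          _ = γ := Real.mul_self_sqrt hγpos.le
  have hS'ne : S'.Nonempty := hSne.mono hSS'
  have hS'bdd : BddAbove S' := ⟨γ, hS'le⟩
  refine le_antisymm (csSup_le hS'ne hS'le) ?_
  rw [hγ]
  exact csSup_le_csSup hS'bdd hSne hSS'
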